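/- arXiv:1512.01748 — 3 statements merged into one kernel-verified Lean document; each statement's English description precedes it below -/
import Mathlib

section
/- Let D be a real n×n matrix with singular value decomposition D = U · diag(σ) · Vᵀ, where U, V are orthogonal and σ₁ ≥ σ₂ ≥ ⋯ ≥ σ_n ≥ 0. Fix 1 ≤ K ≤ n and α ∈ [0, 1], and let X̃ = Σ_{k=1}^{K} σ_k u_k v_kᵀ be the best rank-K approximation of D given by truncated SVD. Then X̃ is a fixed point of the rank-K update map: X̃ minimizes ‖Y − (α·X̃ + (1−α)·D)‖_F over all real n×n matrices Y with rank(Y) ≤ K. -/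
open Matrix Finset

open scoped RealInnerProductSpace

section Helpers

lemma card_filter_lt' {n K : ℕ} (hKn : K ≤ n) :
    (Finset.univ.filter (fun k : Fin n => (k : ℕ) < K)).card = K := by
  have h1 : (Finset.univ.filter (fun k : Fin n => (k : ℕ) < K)).image Fin.val
      = Finset.range K := by
    ext j
    simp only [Finset.mem_image, Finset.mem_filter, Finset.mem_univ, true_and, Finset.mem_range]
    exact ⟨fun ⟨k, hk, h⟩ => h ▸ hk, fun hj => ⟨⟨j, lt_of_lt_of_le hj hKn⟩, hj, rfl⟩⟩
  have h2 := Finset.card_image_of_injective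
    (Finset.univ.filter (fun k : Fin n => (k : ℕ) < K)) Fin.val_injective
  rw [h1, Finset.card_range] at h2
  omega

lemma weight_sum_le' {n K : ℕ} (hK1 : 1 ≤ K) (hKn : K ≤ n) (lam w : Fin n → ℝ)
    (hlam : Antitone lam) (hlam0 : ∀ i, 0 ≤ lam i) (hw0 : ∀ i, 0 ≤ w i) (hw1 : ∀ i, w i ≤ 1)
    (hsum : ∑ i, w i ≤ K) :
    ∑ i, lam i * w i ≤ ∑ i ∈ Finset.univ.filter (fun i : Fin n => (i : ℕ) < K), lam i := by
  set s := Finset.univ.filter (fun i : Fin n => (i : ℕ) < K) with hs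
  set j : Fin n := ⟨K - 1, by omega⟩ with hj
  have hjs : ∀ i ∈ s, lam j ≤ lam i := by
    intro i hi
    simp only [hs, Finset.mem_filter] at hi
    exact hlam (by simp [hj, Fin.le_def]; omega)
  have hjs' : ∀ i ∈ sᶜ, lam i ≤ lam j := by
    intro i hi
    simp only [hs, Finset.mem_compl, Finset.mem_filter, Finset.mem_univ, true_and, not_lt] at hi
    exact hlam (by simp [hj, Fin.le_def]; omega)
  have split : ∑ i, lam i * w i = ∑ i ∈ s, lam i * w i + ∑ i ∈ sᶜ, lam i * w i :=
    (Finset.sum_add_sum_compl s _).symm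
  have h1 : ∑ i ∈ s, lam i * w i ≤ ∑ i ∈ s, (lam i + lam j * (w i - 1)) := by
    apply Finset.sum_le_sum
    intro i hi
    have hwle : w i - 1 ≤ 0 := by linarith [hw1 i]
    have hmul : lam i * (w i - 1) ≤ lam j * (w i - 1) :=
      mul_le_mul_of_nonpos_right (hjs i hi) hwle
    nlinarith [hmul]
  have h2 : ∑ i ∈ sᶜ, lam i * w i ≤ ∑ i ∈ sᶜ, lam j * w i :=
    Finset.sum_le_sum fun i hi => mul_le_mul_of_nonneg_right (hjs' i hi) (hw0 i)
  have hcard : (s.card : ℝ) = K := by rw [hs, card_filter_lt' hKn]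
  have hwsplit : ∑ i ∈ s, w i + ∑ i ∈ sᶜ, w i = ∑ i, w i := Finset.sum_add_sum_compl s w
  have expand : ∑ i ∈ s, (lam i + lam j * (w i - 1)) + ∑ i ∈ sᶜ, lam j * w i
      = ∑ i ∈ s, lam i + lam j * ((∑ i ∈ s, w i + ∑ i ∈ sᶜ, w i) - s.card) := by
    rw [Finset.sum_add_distrib, ← Finset.mul_sum, ← Finset.mul_sum, Finset.sum_sub_distrib,
      Finset.sum_const, nsmul_eq_mul, mul_one]
    ring
  rw [hwsplit, hcard] at expand
  have hfinal : lam j * (∑ i, w i - K) ≤ 0 :=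
    mul_nonpos_of_nonneg_of_nonpos (hlam0 j) (by linarith)
  linarith [split, h1, h2, expand.le, hfinal]

lemma ortho_cols' {n : ℕ} (A : Matrix (Fin n) (Fin n) ℝ) (hA : Aᵀ * A = 1) (k l : Fin n) :
    ∑ i, A i k * A i l = if k = l then 1 else 0 := by
  have := congrFun (congrFun hA k) l
  simpa [Matrix.mul_apply, Matrix.transpose_apply, Matrix.one_apply] using this

lemma bilin_expand' {n : ℕ} (V : Matrix (Fin n) (Fin n) ℝ) (hV : Vᵀ * V = 1)
    (c d : Fin n → ℝ) :
    ∑ j, (∑ k, c k * V j k) * (∑ l, d l * V j l) = ∑ k, c k * d k := by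
  have step1 : ∀ j : Fin n, (∑ k, c k * V j k) * (∑ l, d l * V j l)
      = ∑ k, ∑ l, (c k * d l) * (V j k * V j l) := by
    intro j
    rw [Finset.sum_mul_sum]
    exact Finset.sum_congr rfl fun k _ => Finset.sum_congr rfl fun l _ => by ring
  calc ∑ j, (∑ k, c k * V j k) * (∑ l, d l * V j l)
      = ∑ j : Fin n, ∑ k, ∑ l, (c k * d l) * (V j k * V j l) :=
        Finset.sum_congr rfl fun j _ => step1 j
    _ = ∑ k, ∑ l, ∑ j : Fin n, (c k * d l) * (V j k * V j l) := by
        rw [Finset.sum_comm]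
        exact Finset.sum_congr rfl fun k _ => Finset.sum_comm
    _ = ∑ k, ∑ l, (c k * d l) * (if k = l then 1 else 0) := by
        refine Finset.sum_congr rfl fun k _ => Finset.sum_congr rfl fun l _ => ?_
        rw [← Finset.mul_sum, ortho_cols' V hV k l]
    _ = ∑ k, c k * d k := by
        refine Finset.sum_congr rfl fun k _ => ?_
        simp

/-- Squared-sum expansion for matrices of the form `A i j = ∑ k, c k * (U i k * V j k)`
with `U, V` having orthonormal columns. -/
lemma sq_sum_expand' {n : ℕ} (U V : Matrix (Fin n) (Fin n) ℝ)
    (hU : Uᵀ * U = 1) (hV : Vᵀ * V = 1) (c : Fin n → ℝ) :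
    ∑ i, ∑ j, (∑ k, c k * (U i k * V j k)) ^ 2 = ∑ k, (c k) ^ 2 := by
  have h1 : ∀ i : Fin n, ∑ j, (∑ k, c k * (U i k * V j k)) ^ 2
      = ∑ k, (c k * U i k) ^ 2 := by
    intro i
    have := bilin_expand' V hV (fun k => c k * U i k) (fun k => c k * U i k)
    calc ∑ j, (∑ k, c k * (U i k * V j k)) ^ 2
        = ∑ j, (∑ k, (c k * U i k) * V j k) * (∑ l, (c l * U i l) * V j l) := by
          refine Finset.sum_congr rfl fun j _ => ?_
          rw [sq]
          congr 1 <;> exact Finset.sum_congr rfl fun k _ => by ring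
      _ = ∑ k, (c k * U i k) * (c k * U i k) := this
      _ = ∑ k, (c k * U i k) ^ 2 := Finset.sum_congr rfl fun k _ => (sq _).symm
  calc ∑ i, ∑ j, (∑ k, c k * (U i k * V j k)) ^ 2
      = ∑ i, ∑ k, (c k * U i k) ^ 2 := Finset.sum_congr rfl fun i _ => h1 i
    _ = ∑ k, ∑ i, (c k * U i k) ^ 2 := Finset.sum_comm
    _ = ∑ k, (c k) ^ 2 * (∑ i, U i k * U i k) := by
        refine Finset.sum_congr rfl fun k _ => ?_
        rw [Finset.mul_sum]
        exact Finset.sum_congr rfl fun i _ => by ring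
    _ = ∑ k, (c k) ^ 2 := by
        refine Finset.sum_congr rfl fun k _ => ?_
        rw [ortho_cols' U hU k k, if_pos rfl, mul_one]

lemma col_ineq' {E : Type*} [NormedAddCommGroup E] [InnerProductSpace ℝ E]
    {ι : Type*} [Fintype ι] [DecidableEq ι] (g : ι → E) (hg : Orthonormal ℝ g) (m y : E)
    (hy : y ∈ Submodule.span ℝ (Set.range g)) :
    ‖m‖ ^ 2 - ∑ i, ⟪g i, m⟫ ^ 2 ≤ ‖y - m‖ ^ 2 := by
  set p : E := ∑ i, ⟪g i, m⟫ • g i with hp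
  have hgi : ∀ i, ⟪g i, p⟫ = ⟪g i, m⟫ := by
    intro i
    rw [hp, inner_sum]
    simp only [real_inner_smul_right]
    rw [Finset.sum_eq_single i]
    · rw [orthonormal_iff_ite.mp hg, if_pos rfl, mul_one]
    · intro b _ hb
      rw [orthonormal_iff_ite.mp hg, if_neg (Ne.symm hb), mul_zero]
    · intro h; exact absurd (Finset.mem_univ i) h
  have hperp : ∀ z ∈ Submodule.span ℝ (Set.range g), ⟪z, m - p⟫ = 0 := by
    intro z hz
    induction hz using Submodule.span_induction with
    | mem x hx =>
      obtain ⟨i, rfl⟩ := hx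
      rw [inner_sub_right, hgi i, sub_self]
    | zero => exact inner_zero_left _
    | add a b _ _ ha hb => rw [inner_add_left, ha, hb, add_zero]
    | smul r a _ ha => rw [real_inner_smul_left, ha, mul_zero]
  have hpspan : p ∈ Submodule.span ℝ (Set.range g) :=
    Submodule.sum_mem _ fun i _ =>
      Submodule.smul_mem _ _ (Submodule.subset_span ⟨i, rfl⟩)
  have hpp : ⟪p, m⟫ = ‖p‖ ^ 2 := by
    have := hperp p hpspan
    rw [inner_sub_right] at this
    rw [← real_inner_self_eq_norm_sq]
    linarith
  have hcross : ⟪y - p, p - m⟫ = 0 := by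
    have h1 := hperp (y - p) (Submodule.sub_mem _ hy hpspan)
    have h2 : p - m = -(m - p) := (neg_sub m p).symm
    rw [h2, inner_neg_right, h1, neg_zero]
  have hpyth : ‖y - m‖ ^ 2 = ‖y - p‖ ^ 2 + ‖p - m‖ ^ 2 := by
    have h3 : y - m = (y - p) + (p - m) := (sub_add_sub_cancel y p m).symm
    rw [h3, norm_add_sq_real, hcross]
    ring
  have hpnorm : ‖p‖ ^ 2 = ∑ i, ⟪g i, m⟫ ^ 2 := by
    rw [← real_inner_self_eq_norm_sq, hp]
    rw [sum_inner]
    simp only [real_inner_smul_left]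
    refine Finset.sum_congr rfl fun i _ => ?_
    rw [← hp, hgi i, sq]
  have hpm : ‖p - m‖ ^ 2 = ‖m‖ ^ 2 - ‖p‖ ^ 2 := by
    rw [norm_sub_sq_real, hpp]
    ring
  nlinarith [sq_nonneg ‖y - p‖]

lemma euclid_inner' {n : ℕ} (x y : EuclideanSpace ℝ (Fin n)) :
    ⟪x, y⟫ = ∑ i, x i * y i := by
  rw [PiLp.inner_apply]
  simp [RCLike.inner_apply, conj_trivial]
  exact Finset.sum_congr rfl fun i _ => mul_comm _ _

end Helpers

/-- Frobenius norm of a real matrix. -/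
noncomputable def frob {n : ℕ} (M : Matrix (Fin n) (Fin n) ℝ) : ℝ :=
  Real.sqrt (∑ i, ∑ j, (M i j) ^ 2)

/-- The truncated-SVD best rank-`K` approximation `X̃ = ∑_{k<K} σ_k u_k v_kᵀ` of
`D` is a fixed point of the rank-`K` ADMM update map: `X̃` minimizes
`‖Y − (α X̃ + (1−α) D)‖_F` over all matrices `Y` of rank at most `K`. -/
theorem truncated_svd_is_fixed_point {n : ℕ}
    (D : Matrix (Fin n) (Fin n) ℝ)
    (U V : Matrix (Fin n) (Fin n) ℝ) (σ : Fin n → ℝ)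
    (hU : Uᵀ * U = 1) (hV : Vᵀ * V = 1)
    (hD : D = U * Matrix.diagonal σ * Vᵀ)
    (hσmono : Antitone σ) (hσnonneg : ∀ i, 0 ≤ σ i)
    (K : ℕ) (hK1 : 1 ≤ K) (hKn : K ≤ n)
    (α : ℝ) (hα : α ∈ Set.Icc (0 : ℝ) 1)
    (Xtilde : Matrix (Fin n) (Fin n) ℝ)
    (hX : Xtilde = ∑ k ∈ Finset.univ.filter (fun k : Fin n => (k : ℕ) < K),
      σ k • Matrix.vecMulVec (fun i => U i k) (fun j => V j k)) :
    Xtilde.rank ≤ K ∧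
      ∀ Y : Matrix (Fin n) (Fin n) ℝ, Y.rank ≤ K →
        frob (Xtilde - (α • Xtilde + (1 - α) • D)) ≤
          frob (Y - (α • Xtilde + (1 - α) • D)) := by
  obtain ⟨hα0, hα1⟩ := hα
  have hUU : U * Uᵀ = 1 := mul_eq_one_comm.mp hU
  -- entrywise description of Xtilde
  have hXe : ∀ i j, Xtilde i j = ∑ k : Fin n, (if (k : ℕ) < K then σ k else 0) * (U i k * V j k) := by
    intro i j
    rw [hX]
    rw [Matrix.sum_apply, Finset.sum_filter]
    refine Finset.sum_congr rfl fun k _ => ?_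
    by_cases h : (k : ℕ) < K <;>
      simp [h, Matrix.smul_apply, Matrix.vecMulVec_apply, smul_eq_mul, mul_assoc]
  -- entrywise description of D
  have hDe : ∀ i j, D i j = ∑ k, σ k * (U i k * V j k) := by
    intro i j
    rw [hD, Matrix.mul_apply]
    refine Finset.sum_congr rfl fun k _ => ?_
    rw [Matrix.mul_diagonal, Matrix.transpose_apply]
    ring
  -- singular values of M
  set τ : Fin n → ℝ := fun k => if (k : ℕ) < K then σ k else (1 - α) * σ k with hτ
  set M : Matrix (Fin n) (Fin n) ℝ := α • Xtilde + (1 - α) • D with hM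
  have hMe : ∀ i j, M i j = ∑ k, τ k * (U i k * V j k) := by
    intro i j
    rw [hM]
    simp only [Matrix.add_apply, Matrix.smul_apply, smul_eq_mul, hXe i j, hDe i j]
    rw [Finset.mul_sum, Finset.mul_sum, ← Finset.sum_add_distrib]
    refine Finset.sum_congr rfl fun k _ => ?_
    rw [hτ]
    by_cases h : (k : ℕ) < K <;> simp [h] <;> ring
  -- entrywise description of Xtilde - M
  have hXMe : ∀ i j, Xtilde i j - M i j
      = ∑ k : Fin n, (if (k : ℕ) < K then 0 else -((1 - α) * σ k)) * (U i k * V j k) := by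
    intro i j
    rw [hXe i j, hMe i j, ← Finset.sum_sub_distrib]
    refine Finset.sum_congr rfl fun k _ => ?_
    rw [hτ]
    by_cases h : (k : ℕ) < K <;> simp [h] <;> ring
  -- lam = squared singular values of M
  set lam : Fin n → ℝ := fun k => (τ k) ^ 2 with hlam
  have hτnonneg : ∀ k, 0 ≤ τ k := by
    intro k
    simp only [hτ]
    by_cases h : (k : ℕ) < K
    · rw [if_pos h]; exact hσnonneg k
    · rw [if_neg h]; exact mul_nonneg (by linarith) (hσnonneg k)
  have hτmono : Antitone τ := by
    intro a b hab
    simp only [hτ]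
    by_cases ha : (a : ℕ) < K <;> by_cases hb : (b : ℕ) < K
    · rw [if_pos ha, if_pos hb]; exact hσmono hab
    · rw [if_pos ha, if_neg hb]
      calc (1 - α) * σ b ≤ 1 * σ b := mul_le_mul_of_nonneg_right (by linarith) (hσnonneg b)
        _ = σ b := one_mul _
        _ ≤ σ a := hσmono hab
    · exact absurd (lt_of_le_of_lt (by exact_mod_cast hab) hb) ha
    · rw [if_neg ha, if_neg hb]
      exact mul_le_mul_of_nonneg_left (hσmono hab) (by linarith)
  have hlammono : Antitone lam := fun a b hab =>
    pow_le_pow_left₀ (hτnonneg b) (hτmono hab) 2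
  have hlamnonneg : ∀ k, 0 ≤ lam k := fun k => sq_nonneg _
  -- value of the objective at Xtilde
  have hSX : ∑ i, ∑ j, (Xtilde i j - M i j) ^ 2
      = ∑ k, lam k - ∑ k ∈ Finset.univ.filter (fun k : Fin n => (k : ℕ) < K), lam k := by
    have h1 : ∑ i, ∑ j, (Xtilde i j - M i j) ^ 2
        = ∑ k : Fin n, (if (k : ℕ) < K then 0 else -((1 - α) * σ k)) ^ 2 := by
      rw [← sq_sum_expand' U V hU hV (fun k => if (k : ℕ) < K then 0 else -((1 - α) * σ k))]
      exact Finset.sum_congr rfl fun i _ => Finset.sum_congr rfl fun j _ => by rw [hXMe i j]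
    rw [h1, Finset.sum_filter, ← Finset.sum_sub_distrib]
    refine Finset.sum_congr rfl fun k _ => ?_
    simp only [hlam, hτ]
    by_cases h : (k : ℕ) < K <;> simp [h] <;> ring
  constructor
  · -- rank bound
    have hXmat : Xtilde
        = U * Matrix.diagonal (fun k : Fin n => if (k : ℕ) < K then σ k else 0) * Vᵀ := by
      ext i j
      rw [hXe i j, Matrix.mul_apply]
      refine Finset.sum_congr rfl fun k _ => ?_
      rw [Matrix.mul_diagonal, Matrix.transpose_apply]
      ring
    rw [hXmat]
    calc (U * Matrix.diagonal (fun k : Fin n => if (k : ℕ) < K then σ k else 0) * Vᵀ).rank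
        ≤ (U * Matrix.diagonal (fun k : Fin n => if (k : ℕ) < K then σ k else 0)).rank :=
          Matrix.rank_mul_le_left _ _
      _ ≤ (Matrix.diagonal (fun k : Fin n => if (k : ℕ) < K then σ k else 0)).rank :=
          Matrix.rank_mul_le_right _ _
      _ ≤ K := by
          rw [Matrix.rank_diagonal]
          rw [Fintype.card_subtype]
          calc (Finset.univ.filter
                (fun k : Fin n => (if (k : ℕ) < K then σ k else 0) ≠ 0)).card
              ≤ (Finset.univ.filter (fun k : Fin n => (k : ℕ) < K)).card := by
                apply Finset.card_le_card
                intro k hk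
                simp only [Finset.mem_filter, Finset.mem_univ, true_and] at hk ⊢
                by_contra h
                exact hk (by simp [h])
            _ = K := card_filter_lt' hKn
  · -- minimality
    intro Y hYr
    rw [frob, frob]
    apply Real.sqrt_le_sqrt
    -- reduce to squared sums
    have key : ∑ i, ∑ j, (Xtilde i j - M i j) ^ 2 ≤ ∑ i, ∑ j, (Y i j - M i j) ^ 2 := by
      -- set up the column space of Y
      set W : Submodule ℝ (EuclideanSpace ℝ (Fin n)) :=
        Submodule.span ℝ (Set.range (fun j => WithLp.toLp 2 (Yᵀ j)) :
          Set (EuclideanSpace ℝ (Fin n))) with hW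
      have hfr : Module.finrank ℝ W ≤ K := by
        have h := Y.rank_eq_finrank_span_cols
        have h2 : Module.finrank ℝ W = Module.finrank ℝ (Submodule.span ℝ (Set.range Y.col)) := by
          rw [← LinearEquiv.finrank_map_eq (WithLp.linearEquiv 2 ℝ (Fin n → ℝ)).symm,
            ← Submodule.span_image, ← Set.range_comp]
          rfl
        rw [h2, ← h]; exact hYr
      set d := Module.finrank ℝ W with hd
      set b := stdOrthonormalBasis ℝ W with hb
      set g : Fin d → EuclideanSpace ℝ (Fin n) := fun i => (b i : EuclideanSpace ℝ (Fin n))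
        with hg
      have hgon : Orthonormal ℝ g := by
        rw [orthonormal_iff_ite]
        intro i j
        have := orthonormal_iff_ite.mp b.orthonormal i j
        rwa [Submodule.coe_inner] at this
      have hspan : Submodule.span ℝ (Set.range g) = W := by
        have h1 : Set.range g = W.subtype '' Set.range b := by
          rw [← Set.range_comp]; rfl
        rw [h1, Submodule.span_image, ← b.coe_toBasis, Module.Basis.span_eq, Submodule.map_subtype_top]
      -- the columns
      set mc : Fin n → EuclideanSpace ℝ (Fin n) := fun j => WithLp.toLp 2 (fun i => M i j) with hmc
      set yc : Fin n → EuclideanSpace ℝ (Fin n) := fun j => WithLp.toLp 2 (fun i => Y i j) with hyc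
      have hyW : ∀ j, yc j ∈ Submodule.span ℝ (Set.range g) := by
        intro j
        rw [hspan, hW]
        exact Submodule.subset_span ⟨j, rfl⟩
      -- per-column inequality
      have hnormsq : ∀ x : EuclideanSpace ℝ (Fin n), ‖x‖ ^ 2 = ∑ i, x i * x i := by
        intro x
        rw [← real_inner_self_eq_norm_sq, euclid_inner']
      have hcolineq : ∀ j, ‖mc j‖ ^ 2 - ∑ i, ⟪g i, mc j⟫ ^ 2 ≤ ‖yc j - mc j‖ ^ 2 :=
        fun j => col_ineq' g hgon (mc j) (yc j) (hyW j)
      -- γ i k = inner of g i with k-th left singular vector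
      set γ : Fin d → Fin n → ℝ := fun i k => ∑ q, g i q * U q k with hγ
      have hgm : ∀ i j, ⟪g i, mc j⟫ = ∑ k, (τ k * γ i k) * V j k := by
        intro i j
        rw [euclid_inner']
        calc ∑ q, g i q * mc j q
            = ∑ q, ∑ k, (g i q * U q k) * (τ k * V j k) := by
              refine Finset.sum_congr rfl fun q _ => ?_
              rw [hmc]
              show g i q * M q j = _
              rw [hMe q j, Finset.mul_sum]
              exact Finset.sum_congr rfl fun k _ => by ring
          _ = ∑ k, ∑ q, (g i q * U q k) * (τ k * V j k) := Finset.sum_comm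
          _ = ∑ k, (τ k * γ i k) * V j k := by
              refine Finset.sum_congr rfl fun k _ => ?_
              rw [← Finset.sum_mul, hγ]
              ring
      -- sum over columns of projections
      set w : Fin n → ℝ := fun k => ∑ i, (γ i k) ^ 2 with hw'
      have hproj : ∑ j, ∑ i, ⟪g i, mc j⟫ ^ 2 = ∑ k, lam k * w k := by
        calc ∑ j, ∑ i, ⟪g i, mc j⟫ ^ 2
            = ∑ i, ∑ j, ⟪g i, mc j⟫ ^ 2 := Finset.sum_comm
          _ = ∑ i, ∑ k, (τ k * γ i k) ^ 2 := by
              refine Finset.sum_congr rfl fun i _ => ?_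
              have := bilin_expand' V hV (fun k => τ k * γ i k) (fun k => τ k * γ i k)
              calc ∑ j, ⟪g i, mc j⟫ ^ 2
                  = ∑ j, (∑ k, (τ k * γ i k) * V j k) * (∑ l, (τ l * γ i l) * V j l) := by
                    refine Finset.sum_congr rfl fun j _ => ?_
                    rw [hgm i j, sq]
                _ = ∑ k, (τ k * γ i k) * (τ k * γ i k) := this
                _ = ∑ k, (τ k * γ i k) ^ 2 := Finset.sum_congr rfl fun k _ => (sq _).symm
          _ = ∑ k, ∑ i, (τ k * γ i k) ^ 2 := Finset.sum_comm
          _ = ∑ k, lam k * w k := by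
              refine Finset.sum_congr rfl fun k _ => ?_
              rw [hw', hlam, Finset.mul_sum]
              exact Finset.sum_congr rfl fun i _ => by ring
      -- bounds on w
      have hw0 : ∀ k, 0 ≤ w k := fun k => Finset.sum_nonneg fun i _ => sq_nonneg _
      have hw1 : ∀ k, w k ≤ 1 := by
        intro k
        set u : EuclideanSpace ℝ (Fin n) := WithLp.toLp 2 (fun q => U q k) with hu
        have hbessel := hgon.sum_inner_products_le (s := Finset.univ) u
        have hun : ‖u‖ ^ 2 = 1 := by
          rw [hnormsq]
          show ∑ q, U q k * U q k = 1
          rw [ortho_cols' U hU k k, if_pos rfl]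
        have heq : ∀ i, ‖⟪g i, u⟫‖ ^ 2 = (γ i k) ^ 2 := by
          intro i
          rw [Real.norm_eq_abs, sq_abs, euclid_inner']
        rw [hw']
        calc ∑ i, (γ i k) ^ 2 = ∑ i, ‖⟪g i, u⟫‖ ^ 2 :=
              Finset.sum_congr rfl fun i _ => (heq i).symm
          _ ≤ ‖u‖ ^ 2 := hbessel
          _ = 1 := hun
      have hwsum : ∑ k, w k ≤ (K : ℝ) := by
        have hrow : ∀ i, ∑ k, (γ i k) ^ 2 = 1 := by
          intro i
          have := bilin_expand' Uᵀ hUU (fun q => g i q) (fun q => g i q)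
          calc ∑ k, (γ i k) ^ 2
              = ∑ k, (∑ q, g i q * Uᵀ k q) * (∑ q, g i q * Uᵀ k q) := by
                refine Finset.sum_congr rfl fun k _ => ?_
                rw [hγ, sq]; rfl
            _ = ∑ q, g i q * g i q := this
            _ = ‖g i‖ ^ 2 := (hnormsq (g i)).symm
            _ = 1 := by rw [hgon.1 i, one_pow]
        calc ∑ k, w k = ∑ k, ∑ i, (γ i k) ^ 2 := rfl
          _ = ∑ i, ∑ k, (γ i k) ^ 2 := Finset.sum_comm
          _ = ∑ i : Fin d, (1 : ℝ) := Finset.sum_congr rfl fun i _ => hrow i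
          _ = d := by rw [Finset.sum_const, nsmul_eq_mul, mul_one, Finset.card_univ,
              Fintype.card_fin]
          _ ≤ K := by exact_mod_cast hfr
      -- apply the weight lemma
      have hweight : ∑ k, lam k * w k
          ≤ ∑ k ∈ Finset.univ.filter (fun k : Fin n => (k : ℕ) < K), lam k :=
        weight_sum_le' hK1 hKn lam w hlammono hlamnonneg hw0 hw1 hwsum
      -- norm of M columns
      have hMnorm : ∑ j, ‖mc j‖ ^ 2 = ∑ k, lam k := by
        calc ∑ j, ‖mc j‖ ^ 2 = ∑ j, ∑ i, mc j i * mc j i :=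
              Finset.sum_congr rfl fun j _ => hnormsq (mc j)
          _ = ∑ i, ∑ j, (M i j) ^ 2 := by
              rw [Finset.sum_comm]
              exact Finset.sum_congr rfl fun i _ => Finset.sum_congr rfl fun j _ => (sq _).symm
          _ = ∑ k, (τ k) ^ 2 := by
              rw [← sq_sum_expand' U V hU hV τ]
              exact Finset.sum_congr rfl fun i _ => Finset.sum_congr rfl fun j _ => by
                rw [hMe i j]
          _ = ∑ k, lam k := rfl
      -- put it together
      have hYlower : ∑ k, lam k
          - ∑ k ∈ Finset.univ.filter (fun k : Fin n => (k : ℕ) < K), lam k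
          ≤ ∑ i, ∑ j, (Y i j - M i j) ^ 2 := by
        have hsum1 : ∑ j, (‖mc j‖ ^ 2 - ∑ i, ⟪g i, mc j⟫ ^ 2) ≤ ∑ j, ‖yc j - mc j‖ ^ 2 :=
          Finset.sum_le_sum fun j _ => hcolineq j
        rw [Finset.sum_sub_distrib, hMnorm, hproj] at hsum1
        have hrhs : ∑ j, ‖yc j - mc j‖ ^ 2 = ∑ i, ∑ j, (Y i j - M i j) ^ 2 := by
          calc ∑ j, ‖yc j - mc j‖ ^ 2 = ∑ j, ∑ i, (yc j - mc j) i * (yc j - mc j) i :=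
                Finset.sum_congr rfl fun j _ => hnormsq _
            _ = ∑ i, ∑ j, (Y i j - M i j) ^ 2 := by
                rw [Finset.sum_comm]
                refine Finset.sum_congr rfl fun i _ => Finset.sum_congr rfl fun j _ => ?_
                show (Y i j - M i j) * (Y i j - M i j) = _
                rw [sq]
          
        rw [hrhs] at hsum1
        linarith [hweight, hsum1]
      rw [hSX]
      exact hYlower
    have hsub : ∀ (A : Matrix (Fin n) (Fin n) ℝ) (i j : Fin n), (A - M) i j = A i j - M i j :=
      fun A i j => rfl
    calc ∑ i, ∑ j, ((Xtilde - M) i j) ^ 2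
        = ∑ i, ∑ j, (Xtilde i j - M i j) ^ 2 := by
          exact Finset.sum_congr rfl fun i _ => Finset.sum_congr rfl fun j _ => by
            rw [hsub]
      _ ≤ ∑ i, ∑ j, (Y i j - M i j) ^ 2 := key
      _ = ∑ i, ∑ j, ((Y - M) i j) ^ 2 := by
          exact Finset.sum_congr rfl fun i _ => Finset.sum_congr rfl fun j _ => by
            rw [hsub]
end

section
/- Let D be a real n×n matrix with singular value decomposition D = U · diag(σ) · Vᵀ, where U, V are orthogonal and σ₁ ≥ σ₂ ≥ ⋯ ≥ σ_n ≥ 0. Fix 1 ≤ K ≤ n and α ∈ [0, 1], and let I ⊆ {1, …, n} be a subset of size K such that σ_i ≥ (1−α)·σ_j for every i ∈ I and j ∉ I. Then X̃ = Σ_{i∈I} σ_i u_i v_iᵀ is a fixed point of the rank-K update map: X̃ minimizes ‖Y − (α·X̃ + (1−α)·D)‖_F over all real n×n matrices Y with rank(Y) ≤ K. -/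
open Matrix Finset

/-! ### Auxiliary lemmas -/

noncomputable def fSq {n : ℕ} (M : Matrix (Fin n) (Fin n) ℝ) : ℝ := ∑ i, ∑ j, (M i j) ^ 2

lemma fSq_eq_trace {n : ℕ} (M : Matrix (Fin n) (Fin n) ℝ) : fSq M = Matrix.trace (Mᵀ * M) := by
  simp only [fSq, Matrix.trace, Matrix.diag_apply, Matrix.mul_apply, Matrix.transpose_apply, sq]
  exact Finset.sum_comm

lemma fSq_udv {n : ℕ} (U V : Matrix (Fin n) (Fin n) ℝ) (hU : Uᵀ * U = 1) (hV : Vᵀ * V = 1)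
    (ν : Fin n → ℝ) : fSq (U * Matrix.diagonal ν * Vᵀ) = ∑ i, ν i ^ 2 := by
  rw [fSq_eq_trace]
  have h1 : (U * Matrix.diagonal ν * Vᵀ)ᵀ * (U * Matrix.diagonal ν * Vᵀ)
      = V * (Matrix.diagonal ν * Matrix.diagonal ν) * Vᵀ := by
    simp only [Matrix.transpose_mul, Matrix.diagonal_transpose, Matrix.transpose_transpose,
      Matrix.mul_assoc]
    rw [← Matrix.mul_assoc Uᵀ U, hU, Matrix.one_mul]
  rw [h1, Matrix.trace_mul_comm, ← Matrix.mul_assoc, hV, Matrix.one_mul,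
    Matrix.diagonal_mul_diagonal, Matrix.trace_diagonal]
  simp [sq]

lemma udv_eq_sum {n : ℕ} (U V : Matrix (Fin n) (Fin n) ℝ) (ν : Fin n → ℝ) :
    U * Matrix.diagonal ν * Vᵀ
      = ∑ i, ν i • Matrix.vecMulVec (fun r => U r i) (fun c => V c i) := by
  ext r c
  simp only [Matrix.mul_apply, Matrix.diagonal_apply, Matrix.transpose_apply, Matrix.sum_apply,
    Matrix.smul_apply, Matrix.vecMulVec_apply, smul_eq_mul, mul_ite, mul_zero,
    Finset.sum_ite_eq, Finset.sum_ite_eq', Finset.mem_univ, if_true]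
  exact Finset.sum_congr rfl fun i _ => by ring

lemma mulVec_orth {n : ℕ} (V : Matrix (Fin n) (Fin n) ℝ) (hV : Vᵀ * V = 1) (z : Fin n → ℝ) :
    (V *ᵥ z) ⬝ᵥ (V *ᵥ z) = z ⬝ᵥ z := by
  rw [dotProduct_mulVec, ← Matrix.mulVec_transpose, Matrix.mulVec_mulVec, hV,
    Matrix.one_mulVec]

lemma rank_smul_vecMulVec_le {n : ℕ} (a b : Fin n → ℝ) (c : ℝ) :
    (c • Matrix.vecMulVec a b).rank ≤ 1 := by
  have h : c • Matrix.vecMulVec a b = Matrix.vecMulVec (c • a) b := by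
    ext r s
    simp [Matrix.vecMulVec_apply, mul_assoc]
  rw [h, Matrix.vecMulVec_eq (Fin 1)]
  exact (Matrix.rank_mul_le_left _ _).trans
    ((Matrix.rank_le_card_width _).trans (by simp))

lemma rank_add_le' {n : ℕ} (A B : Matrix (Fin n) (Fin n) ℝ) :
    (A + B).rank ≤ A.rank + B.rank := by
  rw [Matrix.rank, Matrix.rank, Matrix.rank, Matrix.mulVecLin_add]
  have hle : LinearMap.range (A.mulVecLin + B.mulVecLin)
      ≤ LinearMap.range A.mulVecLin ⊔ LinearMap.range B.mulVecLin := by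
    rintro x ⟨v, rfl⟩
    exact Submodule.mem_sup.2 ⟨_, ⟨v, rfl⟩, _, ⟨v, rfl⟩, rfl⟩
  exact (Submodule.finrank_mono hle).trans
    (Submodule.finrank_add_le_finrank_add_finrank _ _)

lemma rank_sum_le' {n : ℕ} (s : Finset (Fin n)) (f : Fin n → Matrix (Fin n) (Fin n) ℝ) :
    (∑ i ∈ s, f i).rank ≤ ∑ i ∈ s, (f i).rank := by
  classical
  induction s using Finset.induction with
  | empty => simp
  | @insert a s h ih =>
    rw [Finset.sum_insert h, Finset.sum_insert h]
    exact (rank_add_le' _ _).trans (Nat.add_le_add_left ih _)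

lemma euc_inner {n : ℕ} (x y : EuclideanSpace ℝ (Fin n)) :
    (inner ℝ x y : ℝ) = ∑ i, x i * y i := by
  simp [PiLp.inner_apply, RCLike.inner_apply, conj_trivial, mul_comm]

lemma bessel_sum {n m : ℕ} (w : Fin m → EuclideanSpace ℝ (Fin n)) (hw : Orthonormal ℝ w)
    (x : Fin n → ℝ) :
    ∑ a, (∑ i, w a i * x i) ^ 2 ≤ ∑ i, x i ^ 2 := by
  have h := hw.sum_inner_products_le (x := ((WithLp.equiv 2 (Fin n → ℝ)).symm x)) (s := univ)
  have hnorm : ‖(WithLp.equiv 2 (Fin n → ℝ)).symm x‖ ^ 2 = ∑ i, x i ^ 2 := by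
    rw [← real_inner_self_eq_norm_sq, euc_inner]
    simp [sq]
  rw [hnorm] at h
  refine le_trans (le_of_eq ?_) h
  refine Finset.sum_congr rfl fun a _ => ?_
  rw [euc_inner, Real.norm_eq_abs, sq_abs]
  rfl

lemma exists_orthonormal_ker {n K : ℕ} (Y : Matrix (Fin n) (Fin n) ℝ) (hY : Y.rank ≤ K) :
    ∃ m : ℕ, n - K ≤ m ∧ ∃ w : Fin m → EuclideanSpace ℝ (Fin n),
      Orthonormal ℝ w ∧ ∀ a, Yᵀ *ᵥ (w a : Fin n → ℝ) = 0 := by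
  classical
  set S : Submodule ℝ (EuclideanSpace ℝ (Fin n)) := LinearMap.ker (Matrix.toEuclideanLin Yᵀ)
  have hrange : Module.finrank ℝ (LinearMap.range (Matrix.toEuclideanLin Yᵀ)) = Yᵀ.rank := by
    rw [Matrix.rank_eq_finrank_range_toLin Yᵀ (PiLp.basisFun 2 ℝ (Fin n))
      (PiLp.basisFun 2 ℝ (Fin n))]
    rfl
  have hrn : Module.finrank ℝ (LinearMap.range (Matrix.toEuclideanLin Yᵀ))
      + Module.finrank ℝ S = n := by
    rw [LinearMap.finrank_range_add_finrank_ker (Matrix.toEuclideanLin Yᵀ)]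
    simp
  have hm : n - K ≤ Module.finrank ℝ S := by
    have h1 : Yᵀ.rank ≤ K := by rw [Matrix.rank_transpose]; exact hY
    omega
  refine ⟨Module.finrank ℝ S, hm,
    fun a => ((stdOrthonormalBasis ℝ S) a : EuclideanSpace ℝ (Fin n)),
    (stdOrthonormalBasis ℝ S).orthonormal.comp_linearIsometry S.subtypeₗᵢ, fun a => ?_⟩
  have h0 : Matrix.toEuclideanLin Yᵀ
      ((stdOrthonormalBasis ℝ S) a : EuclideanSpace ℝ (Fin n)) = 0 :=
    ((stdOrthonormalBasis ℝ S) a).2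
  exact congrArg WithLp.ofLp h0

/-- Fixed points of the rank-`K` ADMM update map from subsets of singular
triples: if `I` has size `K` and `σ_i ≥ (1−α) σ_j` for all `i ∈ I`, `j ∉ I`,
then `X̃ = ∑_{i∈I} σ_i u_i v_iᵀ` minimizes `‖Y − (α X̃ + (1−α) D)‖_F` over all
matrices `Y` of rank at most `K`. -/
theorem subset_singular_triples_fixed_point {n : ℕ}
    (D : Matrix (Fin n) (Fin n) ℝ)
    (U V : Matrix (Fin n) (Fin n) ℝ) (σ : Fin n → ℝ)
    (hU : Uᵀ * U = 1) (hV : Vᵀ * V = 1)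
    (hD : D = U * Matrix.diagonal σ * Vᵀ)
    (hσmono : Antitone σ) (hσnonneg : ∀ i, 0 ≤ σ i)
    (K : ℕ) (hK1 : 1 ≤ K) (hKn : K ≤ n)
    (α : ℝ) (hα : α ∈ Set.Icc (0 : ℝ) 1)
    (I : Finset (Fin n)) (hIcard : I.card = K)
    (hsep : ∀ i ∈ I, ∀ j ∉ I, (1 - α) * σ j ≤ σ i)
    (Xtilde : Matrix (Fin n) (Fin n) ℝ)
    (hX : Xtilde = ∑ i ∈ I,
      σ i • Matrix.vecMulVec (fun r => U r i) (fun c => V c i)) :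
    Xtilde.rank ≤ K ∧
      ∀ Y : Matrix (Fin n) (Fin n) ℝ, Y.rank ≤ K →
        frob (Xtilde - (α • Xtilde + (1 - α) • D)) ≤
          frob (Y - (α • Xtilde + (1 - α) • D)) := by
  classical
  obtain ⟨hα0, hα1⟩ := hα
  have h1α : (0:ℝ) ≤ 1 - α := by linarith
  constructor
  · -- rank bound
    rw [hX]
    calc (∑ i ∈ I, σ i • Matrix.vecMulVec (fun r => U r i) (fun c => V c i)).rank
        ≤ ∑ i ∈ I, (σ i • Matrix.vecMulVec (fun r => U r i) (fun c => V c i)).rank :=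
          rank_sum_le' I _
      _ ≤ ∑ _i ∈ I, 1 := Finset.sum_le_sum fun i _ => rank_smul_vecMulVec_le _ _ _
      _ = K := by rw [Finset.sum_const, smul_eq_mul, mul_one, hIcard]
  · intro Y hY
    set τ : Fin n → ℝ := fun i => if i ∈ I then σ i else (1 - α) * σ i with hτdef
    have hτnn : ∀ i, 0 ≤ τ i := by
      intro i
      simp only [hτdef]
      split
      · exact hσnonneg i
      · exact mul_nonneg h1α (hσnonneg i)
    have hτle : ∀ i ∈ I, ∀ j ∉ I, τ j ≤ τ i := by
      intro i hi j hj
      simp only [hτdef, if_pos hi, if_neg hj]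
      exact hsep i hi j hj
    set ν₁ : Fin n → ℝ := fun i => if i ∈ I then σ i else 0 with hν₁def
    have hXd : Xtilde = U * Matrix.diagonal ν₁ * Vᵀ := by
      rw [hX, udv_eq_sum, ← Finset.sum_add_sum_compl I
        (fun i => ν₁ i • Matrix.vecMulVec (fun r => U r i) (fun c => V c i))]
      have h2 : ∑ i ∈ Iᶜ, ν₁ i • Matrix.vecMulVec (fun r => U r i) (fun c => V c i) = 0 :=
        Finset.sum_eq_zero fun i hi => by
          simp [hν₁def, Finset.mem_compl.mp hi]
      rw [h2, add_zero]
      exact Finset.sum_congr rfl fun i hi => by simp [hν₁def, hi]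
    have hsmul : ∀ (c : ℝ) (ν : Fin n → ℝ),
        c • (U * Matrix.diagonal ν * Vᵀ) = U * Matrix.diagonal (c • ν) * Vᵀ := by
      intro c ν
      rw [Matrix.diagonal_smul, Matrix.mul_smul, Matrix.smul_mul]
    have hM : α • Xtilde + (1 - α) • D = U * Matrix.diagonal τ * Vᵀ := by
      rw [hXd, hD, hsmul, hsmul, ← Matrix.add_mul, ← Matrix.mul_add, Matrix.diagonal_add]
      have hfun : (fun i => (α • ν₁) i + ((1 - α) • σ) i) = τ := by
        funext i
        by_cases hi : i ∈ I <;>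
          simp only [hν₁def, hτdef, hi, Pi.smul_apply, smul_eq_mul, if_true, if_false,
            mul_zero, zero_add] <;> ring
      rw [hfun]
    have hXmM : Xtilde - (α • Xtilde + (1 - α) • D)
        = U * Matrix.diagonal (ν₁ - τ) * Vᵀ := by
      rw [hM, hXd, ← Matrix.sub_mul, ← Matrix.mul_sub, Matrix.diagonal_sub]
      rfl
    have hLHS : fSq (Xtilde - (α • Xtilde + (1 - α) • D)) = ∑ j ∈ Iᶜ, τ j ^ 2 := by
      rw [hXmM, fSq_udv U V hU hV, ← Finset.sum_add_sum_compl I (fun i => (ν₁ - τ) i ^ 2)]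
      have h1 : ∑ i ∈ I, ((ν₁ - τ) i) ^ 2 = 0 := Finset.sum_eq_zero fun i hi => by
        simp [hν₁def, hτdef, hi]
      rw [h1, zero_add]
      refine Finset.sum_congr rfl fun j hj => ?_
      have hj' := Finset.mem_compl.mp hj
      simp [hν₁def, hτdef, hj', zero_sub, neg_sq]
    obtain ⟨m, hm, w, hw, hker⟩ := exists_orthonormal_ker Y hY
    set g : Fin m → Fin n → ℝ := fun a => Uᵀ *ᵥ (w a : Fin n → ℝ) with hg
    set t : Fin n → ℝ := fun i => ∑ a, (g a i) ^ 2 with ht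
    set M : Matrix (Fin n) (Fin n) ℝ := α • Xtilde + (1 - α) • D with hMdef
    -- step A : Bessel per column
    have hA : ∑ a, ∑ j, ((Y - M)ᵀ *ᵥ (w a : Fin n → ℝ)) j ^ 2 ≤ fSq (Y - M) := by
      rw [Finset.sum_comm]
      have hswap : fSq (Y - M) = ∑ j, ∑ i, ((Y - M) i j) ^ 2 := Finset.sum_comm
      rw [hswap]
      refine Finset.sum_le_sum fun j _ => ?_
      refine le_trans (le_of_eq ?_) (bessel_sum w hw (fun i => (Y - M) i j))
      refine Finset.sum_congr rfl fun a _ => ?_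
      congr 1
      simp [Matrix.mulVec, dotProduct, Matrix.transpose_apply, mul_comm]
    -- step B : per-vector identity
    have hB : ∀ a, ∑ j, ((Y - M)ᵀ *ᵥ (w a : Fin n → ℝ)) j ^ 2
        = ∑ i, τ i ^ 2 * g a i ^ 2 := by
      intro a
      have h0 : (Y - M)ᵀ *ᵥ (w a : Fin n → ℝ) = -(Mᵀ *ᵥ (w a : Fin n → ℝ)) := by
        rw [Matrix.transpose_sub, Matrix.sub_mulVec, hker a, zero_sub]
      have h1 : Mᵀ *ᵥ (w a : Fin n → ℝ) = V *ᵥ (Matrix.diagonal τ *ᵥ g a) := by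
        rw [hM]
        simp only [Matrix.transpose_mul, Matrix.diagonal_transpose, Matrix.transpose_transpose]
        rw [← Matrix.mulVec_mulVec, ← Matrix.mulVec_mulVec]
      rw [h0, h1]
      simp only [Pi.neg_apply, neg_sq]
      have hz : ∀ z : Fin n → ℝ, ∑ j, (V *ᵥ z) j ^ 2 = ∑ i, z i ^ 2 := by
        intro z
        simpa [dotProduct, pow_two] using mulVec_orth V hV z
      rw [hz]
      refine Finset.sum_congr rfl fun i _ => ?_
      have hdiag : (Matrix.diagonal τ *ᵥ g a) i = τ i * g a i := by
        simp [Matrix.mulVec_diagonal]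
      rw [hdiag]
      ring
    -- step C : swap sums
    have hC : ∑ a, ∑ i, τ i ^ 2 * g a i ^ 2 = ∑ i, τ i ^ 2 * t i := by
      rw [Finset.sum_comm]
      exact Finset.sum_congr rfl fun i _ => by
        simp only [ht, ← Finset.mul_sum]
    -- t bounds
    have htnn : ∀ i, 0 ≤ t i := fun i => Finset.sum_nonneg fun a _ => sq_nonneg _
    have hgi : ∀ a i, g a i = ∑ r, w a r * U r i := by
      intro a i
      simp [hg, Matrix.mulVec, dotProduct, Matrix.transpose_apply, mul_comm]
    have hUcol : ∀ i, ∑ r, (U r i) ^ 2 = 1 := by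
      intro i
      have h := congrFun (congrFun hU i) i
      simpa [Matrix.mul_apply, Matrix.transpose_apply, Matrix.one_apply, pow_two] using h
    have ht1 : ∀ i, t i ≤ 1 := by
      intro i
      have hb := bessel_sum w hw (fun r => U r i)
      rw [hUcol i] at hb
      calc t i = ∑ a, (∑ r, w a r * U r i) ^ 2 := by
            simp only [ht]
            exact Finset.sum_congr rfl fun a _ => by rw [hgi]
        _ ≤ 1 := hb
    have hUUT : U * Uᵀ = 1 := mul_eq_one_comm.mp hU
    have hwnorm : ∀ a, ∑ i, (w a i) ^ 2 = 1 := by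
      intro a
      have h1 : (inner ℝ (w a) (w a) : ℝ) = 1 := by
        rw [real_inner_self_eq_norm_sq, hw.1 a]
        norm_num
      rw [euc_inner] at h1
      simpa [pow_two] using h1
    have ht2 : ∑ i, t i = (m : ℝ) := by
      simp only [ht]
      rw [Finset.sum_comm]
      have hga : ∀ a, ∑ i, g a i ^ 2 = 1 := by
        intro a
        have horth : (Uᵀ)ᵀ * Uᵀ = 1 := by rwa [Matrix.transpose_transpose]
        have h2 := mulVec_orth Uᵀ horth (w a : Fin n → ℝ)
        have h3 : ∑ i, g a i ^ 2 = ∑ i, (w a i) ^ 2 := by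
          simpa [hg, dotProduct, pow_two] using h2
        rw [h3, hwnorm]
      rw [Finset.sum_congr rfl fun a _ => hga a]
      simp
    -- counting
    have hIne : I.Nonempty := Finset.card_pos.mp (by omega)
    obtain ⟨i₀, hi₀I, hi₀min⟩ := Finset.exists_min_image I τ hIne
    have hcount : ∑ j ∈ Iᶜ, (1 - t j) ≤ ∑ i ∈ I, t i := by
      have hcompl : ∑ i ∈ I, t i + ∑ j ∈ Iᶜ, t j = ∑ i, t i := Finset.sum_add_sum_compl I t
      have hcard : ((Iᶜ.card : ℕ) : ℝ) = (n : ℝ) - K := by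
        rw [Finset.card_compl, hIcard]
        simp [Nat.cast_sub hKn]
      have hsum : ∑ j ∈ Iᶜ, (1 - t j) = ((Iᶜ.card : ℕ) : ℝ) - ∑ j ∈ Iᶜ, t j := by
        rw [Finset.sum_sub_distrib, Finset.sum_const, nsmul_eq_mul, mul_one]
      have hmn : ((n : ℝ) - K) ≤ (m : ℝ) := by
        have h1 : ((n - K : ℕ) : ℝ) ≤ m := Nat.cast_le.mpr hm
        rwa [Nat.cast_sub hKn] at h1
      rw [hsum, hcard]
      linarith
    have hkey : ∑ j ∈ Iᶜ, τ j ^ 2 ≤ ∑ i, τ i ^ 2 * t i := by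
      rw [← Finset.sum_add_sum_compl I (fun i => τ i ^ 2 * t i)]
      have hsplit : ∑ j ∈ Iᶜ, τ j ^ 2
          = ∑ j ∈ Iᶜ, τ j ^ 2 * t j + ∑ j ∈ Iᶜ, τ j ^ 2 * (1 - t j) := by
        rw [← Finset.sum_add_distrib]
        exact Finset.sum_congr rfl fun j _ => by ring
      rw [hsplit]
      have hmain : ∑ j ∈ Iᶜ, τ j ^ 2 * (1 - t j) ≤ ∑ i ∈ I, τ i ^ 2 * t i := by
        calc ∑ j ∈ Iᶜ, τ j ^ 2 * (1 - t j)
            ≤ ∑ j ∈ Iᶜ, τ i₀ ^ 2 * (1 - t j) := by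
              refine Finset.sum_le_sum fun j hj => ?_
              have hjI := Finset.mem_compl.mp hj
              have hsq := pow_le_pow_left₀ (hτnn j) (hτle i₀ hi₀I j hjI) 2
              have h1t : 0 ≤ 1 - t j := by linarith [ht1 j]
              exact mul_le_mul_of_nonneg_right hsq h1t
          _ = τ i₀ ^ 2 * ∑ j ∈ Iᶜ, (1 - t j) := by rw [Finset.mul_sum]
          _ ≤ τ i₀ ^ 2 * ∑ i ∈ I, t i := mul_le_mul_of_nonneg_left hcount (sq_nonneg _)
          _ = ∑ i ∈ I, τ i₀ ^ 2 * t i := by rw [Finset.mul_sum]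
          _ ≤ ∑ i ∈ I, τ i ^ 2 * t i := Finset.sum_le_sum fun i hi =>
              mul_le_mul_of_nonneg_right (pow_le_pow_left₀ (hτnn i₀) (hi₀min i hi) 2) (htnn i)
      linarith
    -- final chain
    have hfinal : fSq (Xtilde - M) ≤ fSq (Y - M) := by
      calc fSq (Xtilde - M) = ∑ j ∈ Iᶜ, τ j ^ 2 := hLHS
        _ ≤ ∑ i, τ i ^ 2 * t i := hkey
        _ = ∑ a, ∑ i, τ i ^ 2 * g a i ^ 2 := hC.symm
        _ = ∑ a, ∑ j, ((Y - M)ᵀ *ᵥ (w a : Fin n → ℝ)) j ^ 2 :=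
            (Finset.sum_congr rfl fun a _ => hB a).symm
        _ ≤ fSq (Y - M) := hA
    exact Real.sqrt_le_sqrt hfinal
end

section
/- Let D be a real n×n matrix and fix 1 ≤ K ≤ n and α ∈ [0, 1). Suppose X̃ is a real n×n matrix with rank(X̃) ≤ K that is a fixed point of the rank-K update map, i.e., X̃ minimizes ‖Y − (α·X̃ + (1−α)·D)‖_F over all n×n matrices Y with rank(Y) ≤ K. Then there exist orthogonal n×n matrices U, V, a function σ : Fin n → ℝ with σ₁ ≥ ⋯ ≥ σ_n ≥ 0 and D = U · diag(σ) · Vᵀ, and a subset I ⊆ {1, …, n} of size at most K, such that X̃ = Σ_{i∈I} σ_i u_i v_iᵀ. -/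
open Matrix Finset

lemma quad_zero (c q : ℝ) (hq : 0 ≤ q) (h : ∀ t : ℝ, 0 ≤ 2 * t * c + t ^ 2 * q) : c = 0 := by
  have hq1 : (0:ℝ) < q + 1 := by linarith
  have h1 := h (-c / (q + 1))
  rw [div_pow, neg_pow] at h1
  have h2 : (0:ℝ) ≤ (2 * (-c / (q + 1)) * c + (-1:ℝ) ^ 2 * c ^ 2 / (q + 1) ^ 2 * q) * (q+1)^2 :=
    mul_nonneg h1 (by positivity)
  have h3 : (2 * (-c / (q + 1)) * c + (-1:ℝ) ^ 2 * c ^ 2 / (q + 1) ^ 2 * q) * (q+1)^2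
      = -(c^2 * (q + 2)) := by field_simp; ring
  rw [h3] at h2
  nlinarith [sq_nonneg c]

lemma first_order {n : ℕ}
    (D : Matrix (Fin n) (Fin n) ℝ) (K : ℕ)
    (α : ℝ) (hα : α ∈ Set.Ico (0 : ℝ) 1)
    (Xtilde : Matrix (Fin n) (Fin n) ℝ)
    (hrank : Xtilde.rank ≤ K)
    (hfix : ∀ Y : Matrix (Fin n) (Fin n) ℝ, Y.rank ≤ K →
      frob (Xtilde - (α • Xtilde + (1 - α) • D)) ≤
        frob (Y - (α • Xtilde + (1 - α) • D))) :
    Xtildeᵀ * (D - Xtilde) = 0 ∧ (D - Xtilde) * Xtildeᵀ = 0 := by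
  set M := α • Xtilde + (1 - α) • D with hM
  set Z := Xtilde - M with hZ
  have hsq : ∀ Y : Matrix (Fin n) (Fin n) ℝ, Y.rank ≤ K →
      (∑ i, ∑ j, (Z i j) ^ 2) ≤ (∑ i, ∑ j, ((Y - M) i j) ^ 2) := by
    intro Y hY
    have h := hfix Y hY
    have h0 : (0:ℝ) ≤ ∑ i, ∑ j, (Z i j) ^ 2 :=
      Finset.sum_nonneg fun i _ => Finset.sum_nonneg fun j _ => sq_nonneg _
    have h0' : (0:ℝ) ≤ ∑ i, ∑ j, ((Y - M) i j) ^ 2 :=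
      Finset.sum_nonneg fun i _ => Finset.sum_nonneg fun j _ => sq_nonneg _
    calc (∑ i, ∑ j, (Z i j) ^ 2) = Real.sqrt (∑ i, ∑ j, (Z i j) ^ 2) ^ 2 := (Real.sq_sqrt h0).symm
      _ ≤ Real.sqrt (∑ i, ∑ j, ((Y - M) i j) ^ 2) ^ 2 := by
          apply pow_le_pow_left₀ (Real.sqrt_nonneg _) h
      _ = _ := Real.sq_sqrt h0'
  have key : ∀ W : Matrix (Fin n) (Fin n) ℝ, (∀ t : ℝ, (Xtilde + t • W).rank ≤ K) →
      (∑ i, ∑ j, Z i j * W i j) = 0 := by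
    intro W hW
    apply quad_zero _ (∑ i, ∑ j, (W i j) ^ 2)
      (Finset.sum_nonneg fun i _ => Finset.sum_nonneg fun j _ => sq_nonneg _)
    intro t
    have h := hsq (Xtilde + t • W) (hW t)
    have expand : (∑ i, ∑ j, ((Xtilde + t • W - M) i j) ^ 2)
        = ∑ i, ∑ j, ((Z i j) ^ 2 + (2 * t * (Z i j * W i j)
            + t ^ 2 * (W i j) ^ 2)) := by
      refine Finset.sum_congr rfl fun i _ => Finset.sum_congr rfl fun j _ => ?_
      have : (Xtilde + t • W - M) i j = Z i j + t * W i j := by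
        simp [hZ, Matrix.sub_apply, Matrix.add_apply, Matrix.smul_apply]; ring
      rw [this]; ring
    rw [expand] at h
    simp only [Finset.sum_add_distrib, ← Finset.mul_sum] at h
    linarith
  have hZe : ∀ i j, Z i j = (1 - α) * (Xtilde i j - D i j) := by
    intro i j
    simp [hZ, hM, Matrix.sub_apply, Matrix.add_apply, Matrix.smul_apply]
    ring
  have hα1 : (1 : ℝ) - α ≠ 0 := by
    have := hα.2; intro h; linarith [hα.2, sub_eq_zero.mp h]
  constructor
  · -- Xᵀ (D - X) = 0, from W = Xtilde * E
    ext k j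
    have h := key (Xtilde * Matrix.single k j (1:ℝ)) (fun t => by
      have : Xtilde + t • (Xtilde * Matrix.single k j (1:ℝ))
          = Xtilde * (1 + t • Matrix.single k j (1:ℝ)) := by
        rw [Matrix.mul_add, Matrix.mul_one, Matrix.mul_smul]
      rw [this]
      exact le_trans (Matrix.rank_mul_le_left _ _) hrank)
    have hW : ∀ i m, (Xtilde * Matrix.single k j (1:ℝ)) i m
        = if j = m then Xtilde i k else 0 := by
      intro i m
      simp [Matrix.mul_apply, Matrix.single, ite_and]
    have h2 : ∑ i, Z i j * Xtilde i k = 0 := by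
      rw [← h]
      refine Finset.sum_congr rfl fun i _ => ?_
      rw [Finset.sum_eq_single j]
      · rw [hW]; simp
      · intro m _ hm; rw [hW]; simp [Ne.symm hm]
      · simp
    simp only [Matrix.mul_apply, Matrix.transpose_apply, Matrix.sub_apply, Matrix.zero_apply]
    have h3 : ∑ i, (1 - α) * ((Xtilde i j - D i j) * Xtilde i k) = 0 := by
      rw [← h2]; refine Finset.sum_congr rfl fun i _ => ?_; rw [hZe]; ring
    rw [← Finset.mul_sum] at h3
    have h4 := (mul_eq_zero.mp h3).resolve_left hα1
    calc ∑ i, Xtilde i k * (D i j - Xtilde i j)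
        = -∑ i, (Xtilde i j - D i j) * Xtilde i k := by
          rw [← Finset.sum_neg_distrib]; exact Finset.sum_congr rfl fun i _ => by ring
      _ = 0 := by rw [h4]; ring
  · -- (D - X) Xᵀ = 0, from W = E * Xtilde
    ext k j
    have h := key (Matrix.single k j (1:ℝ) * Xtilde) (fun t => by
      have : Xtilde + t • (Matrix.single k j (1:ℝ) * Xtilde)
          = (1 + t • Matrix.single k j (1:ℝ)) * Xtilde := by
        rw [Matrix.add_mul, Matrix.one_mul, Matrix.smul_mul]
      rw [this]
      exact le_trans (Matrix.rank_mul_le_right _ _) hrank)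
    have hW : ∀ i m, (Matrix.single k j (1:ℝ) * Xtilde) i m
        = if k = i then Xtilde j m else 0 := by
      intro i m
      simp [Matrix.mul_apply, Matrix.single, ite_and]
    have h2 : ∑ m, Z k m * Xtilde j m = 0 := by
      rw [← h]
      symm
      calc ∑ i, ∑ m, Z i m * (Matrix.single k j (1:ℝ) * Xtilde) i m
          = ∑ i, (if k = i then ∑ m, Z i m * Xtilde j m else 0) := by
            refine Finset.sum_congr rfl fun i _ => ?_
            simp only [hW, mul_ite, mul_zero]
            split <;> simp
        _ = ∑ m, Z k m * Xtilde j m := by rw [Finset.sum_ite_eq]; simp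
    simp only [Matrix.mul_apply, Matrix.transpose_apply, Matrix.sub_apply, Matrix.zero_apply]
    have h3 : ∑ m, (1 - α) * ((Xtilde k m - D k m) * Xtilde j m) = 0 := by
      rw [← h2]; refine Finset.sum_congr rfl fun m _ => ?_; rw [hZe]; ring
    rw [← Finset.mul_sum] at h3
    have h4 := (mul_eq_zero.mp h3).resolve_left hα1
    calc ∑ m, (D k m - Xtilde k m) * Xtilde j m
        = -∑ m, (Xtilde k m - D k m) * Xtilde j m := by
          rw [← Finset.sum_neg_distrib]; exact Finset.sum_congr rfl fun m _ => by ring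
      _ = 0 := by rw [h4]; ring


lemma sum_dot {ι m : Type*} [Fintype m] (s : Finset ι) (f : ι → (m → ℝ)) (w : m → ℝ) :
    (∑ j ∈ s, f j) ⬝ᵥ w = ∑ j ∈ s, f j ⬝ᵥ w := by
  simp only [dotProduct, Finset.sum_apply, Finset.sum_mul]
  rw [Finset.sum_comm]

lemma dot_mulVec_mulVec' {n : ℕ} (X Y : Matrix (Fin n) (Fin n) ℝ) (u w : Fin n → ℝ) :
    (X *ᵥ u) ⬝ᵥ (Y *ᵥ w) = u ⬝ᵥ ((Xᵀ * Y) *ᵥ w) := by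
  rw [Matrix.dotProduct_mulVec, Matrix.vecMul_mulVec, ← Matrix.dotProduct_mulVec,
    ← Matrix.mulVec_mulVec]

lemma dot_mulVec_mulVec {n : ℕ} (X : Matrix (Fin n) (Fin n) ℝ) (u w : Fin n → ℝ) :
    (X *ᵥ u) ⬝ᵥ (X *ᵥ w) = u ⬝ᵥ ((Xᵀ * X) *ᵥ w) := by
  rw [Matrix.dotProduct_mulVec, Matrix.vecMul_mulVec, ← Matrix.dotProduct_mulVec,
    ← Matrix.mulVec_mulVec]

lemma card_le_rank {n r : ℕ} (X : Matrix (Fin n) (Fin n) ℝ) (a : Fin r → (Fin n → ℝ))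
    (hmem : ∀ j, ∃ w, X *ᵥ w = a j)
    (ha : ∀ i j, a i ⬝ᵥ a j = if i = j then 1 else 0) : r ≤ X.rank := by
  have hli : LinearIndependent ℝ a := by
    rw [Fintype.linearIndependent_iff]
    intro g hg i
    have h := congrArg (fun v => v ⬝ᵥ a i) hg
    simp only [sum_dot, smul_dotProduct, zero_dotProduct] at h
    rw [Finset.sum_congr rfl (fun j _ => by rw [ha])] at h
    simp only [smul_eq_mul, mul_ite, mul_one, mul_zero, Finset.sum_ite_eq',
      Finset.mem_univ, if_true] at h
    exact h
  set W := LinearMap.range X.mulVecLin with hW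
  have haW : ∀ j, a j ∈ W := fun j =>
    ⟨(hmem j).choose, by rw [Matrix.mulVecLin_apply]; exact (hmem j).choose_spec⟩
  have hli' : LinearIndependent ℝ (fun j => (⟨a j, haW j⟩ : W)) := by
    apply LinearIndependent.of_comp W.subtype
    exact hli
  have hcard := hli'.fintype_card_le_finrank
  simpa [Matrix.rank] using hcard

lemma svd_core {n : ℕ} (X : Matrix (Fin n) (Fin n) ℝ) :
    ∃ (r : ℕ) (τ : Fin r → ℝ) (a b : Fin r → (Fin n → ℝ)),
      r ≤ X.rank ∧
      (∀ j, 0 < τ j) ∧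
      (∀ i j, a i ⬝ᵥ a j = if i = j then 1 else 0) ∧
      (∀ i j, b i ⬝ᵥ b j = if i = j then 1 else 0) ∧
      (∀ j, X *ᵥ b j = τ j • a j) ∧
      (∀ j, Xᵀ *ᵥ a j = τ j • b j) ∧
      X = ∑ j, τ j • Matrix.vecMulVec (a j) (b j) := by
  classical
  have hPSD : (Xᵀ * X).PosSemidef := by
    have := Matrix.posSemidef_conjTranspose_mul_self X
    rwa [Matrix.conjTranspose] at this
  set hC := hPSD.1 with hhC
  set V : Fin n → (Fin n → ℝ) := fun i => ⇑(hC.eigenvectorBasis i) with hV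
  set lam : Fin n → ℝ := hC.eigenvalues with hlamdef
  have hmul : ∀ i, (Xᵀ * X) *ᵥ V i = lam i • V i := fun i => hC.mulVec_eigenvectorBasis i
  have hlam : ∀ i, 0 ≤ lam i := fun i => hPSD.eigenvalues_nonneg i
  have hVo : ∀ i j, V i ⬝ᵥ V j = if i = j then 1 else 0 := by
    intro i j
    have := orthonormal_iff_ite.mp (hC.eigenvectorBasis.orthonormal) i j
    rw [EuclideanSpace.inner_eq_star_dotProduct] at this
    simpa [dotProduct_comm] using this
  -- row orthogonality
  have hVrow : ∀ k q, ∑ i, V i k * V i q = if k = q then 1 else 0 := by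
    intro k q
    set P : Matrix (Fin n) (Fin n) ℝ := Matrix.of (fun k i => V i k) with hP
    have hPtP : Pᵀ * P = 1 := by
      ext i j
      simp only [Matrix.mul_apply, Matrix.transpose_apply, Matrix.one_apply, hP, Matrix.of_apply]
      simpa [dotProduct] using hVo i j
    have hPPt : P * Pᵀ = 1 := mul_eq_one_comm.mp hPtP
    have := congrFun (congrFun hPPt k) q
    simpa [Matrix.mul_apply, Matrix.one_apply, hP] using this
  -- rank-one decomposition of X
  have hdecomp : X = ∑ i, Matrix.vecMulVec (X *ᵥ V i) (V i) := by
    ext p q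
    simp only [Matrix.sum_apply, Matrix.vecMulVec_apply, Matrix.mulVec, dotProduct]
    calc X p q = ∑ k, X p k * (if k = q then 1 else 0) := by simp
      _ = ∑ k, X p k * ∑ i, V i k * V i q := by
          refine Finset.sum_congr rfl fun k _ => by rw [hVrow]
      _ = ∑ k, ∑ i, X p k * (V i k * V i q) := by
          refine Finset.sum_congr rfl fun k _ => by rw [Finset.mul_sum]
      _ = ∑ i, ∑ k, X p k * (V i k * V i q) := Finset.sum_comm
      _ = ∑ i, (∑ k, X p k * V i k) * V i q := by
          refine Finset.sum_congr rfl fun i _ => ?_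
          rw [Finset.sum_mul]
          exact Finset.sum_congr rfl fun k _ => by ring
  have hzero : ∀ i, lam i = 0 → X *ᵥ V i = 0 := by
    intro i h0
    rw [← dotProduct_self_eq_zero (v := X *ᵥ V i), dot_mulVec_mulVec, hmul i, h0]
    simp
  set J : Finset (Fin n) := Finset.univ.filter (fun i => lam i ≠ 0) with hJ
  set e := J.orderIsoOfFin rfl with he
  set idx : Fin J.card → Fin n := fun j => (e j : Fin n) with hidx
  have hidx_inj : Function.Injective idx := by
    intro i j h
    exact (OrderIso.injective e) (Subtype.val_injective h)
  have hlam_pos : ∀ j, 0 < lam (idx j) := by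
    intro j
    have hmem : (idx j) ∈ J := (e j).2
    rw [hJ, Finset.mem_filter] at hmem
    exact lt_of_le_of_ne (hlam _) (Ne.symm hmem.2)
  refine ⟨J.card, fun j => Real.sqrt (lam (idx j)),
    fun j => (Real.sqrt (lam (idx j)))⁻¹ • (X *ᵥ V (idx j)),
    fun j => V (idx j), ?_, ?_, ?_, ?_, ?_, ?_, ?_⟩
  · -- rank
    apply card_le_rank X
    · intro j
      refine ⟨(Real.sqrt (lam (idx j)))⁻¹ • V (idx j), ?_⟩
      rw [Matrix.mulVec_smul]
    · intro i j
      have hs : ∀ k, Real.sqrt (lam (idx k)) ≠ 0 :=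
        fun k => ne_of_gt (Real.sqrt_pos.mpr (hlam_pos k))
      rw [smul_dotProduct, dotProduct_smul, dot_mulVec_mulVec, hmul,
        dotProduct_smul, hVo]
      by_cases h : i = j
      · subst h
        have h2 : Real.sqrt (lam (idx i)) * Real.sqrt (lam (idx i)) = lam (idx i) :=
          Real.mul_self_sqrt (hlam _)
        simp only [if_pos rfl, smul_eq_mul, mul_one]
        rw [← h2]
        field_simp
        rw [Real.sqrt_sq (Real.sqrt_nonneg _)]
        exact div_self (pow_ne_zero 2 (hs i))
      · rw [if_neg (fun hh => h (hidx_inj hh)), if_neg h]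
        simp
  · intro j; exact Real.sqrt_pos.mpr (hlam_pos j)
  · -- a orthonormal
    intro i j
    have hs : ∀ k, Real.sqrt (lam (idx k)) ≠ 0 :=
      fun k => ne_of_gt (Real.sqrt_pos.mpr (hlam_pos k))
    rw [smul_dotProduct, dotProduct_smul, dot_mulVec_mulVec, hmul,
      dotProduct_smul, hVo]
    by_cases h : i = j
    · subst h
      have h2 : Real.sqrt (lam (idx i)) * Real.sqrt (lam (idx i)) = lam (idx i) :=
        Real.mul_self_sqrt (hlam _)
      simp only [if_pos rfl, smul_eq_mul, mul_one]
      rw [← h2]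
      field_simp
      rw [Real.sqrt_sq (Real.sqrt_nonneg _)]
      exact div_self (pow_ne_zero 2 (hs i))
    · rw [if_neg (fun hh => h (hidx_inj hh)), if_neg h]
      simp
  · intro i j
    rw [hVo]
    by_cases h : i = j
    · subst h; simp
    · rw [if_neg (fun hh => h (hidx_inj hh)), if_neg h]
  · -- X b = τ a
    intro j
    rw [smul_smul, mul_inv_cancel₀ (ne_of_gt (Real.sqrt_pos.mpr (hlam_pos j))), one_smul]
  · -- Xᵀ a = τ b
    intro j
    rw [Matrix.mulVec_smul, Matrix.mulVec_mulVec, hmul, smul_smul]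
    congr 1
    show (Real.sqrt (lam (idx j)))⁻¹ * lam (idx j) = Real.sqrt (lam (idx j))
    have h2 : Real.sqrt (lam (idx j)) * Real.sqrt (lam (idx j)) = lam (idx j) :=
      Real.mul_self_sqrt (hlam _)
    have hs : Real.sqrt (lam (idx j)) ≠ 0 := ne_of_gt (Real.sqrt_pos.mpr (hlam_pos j))
    rw [← h2]
    field_simp
    rw [Real.sqrt_sq (Real.sqrt_nonneg _)]
  · -- sum decomposition
    have hterm : ∀ j, Real.sqrt (lam (idx j)) •
        Matrix.vecMulVec ((Real.sqrt (lam (idx j)))⁻¹ • (X *ᵥ V (idx j))) (V (idx j))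
        = Matrix.vecMulVec (X *ᵥ V (idx j)) (V (idx j)) := by
      intro j
      ext p q
      have hs : Real.sqrt (lam (idx j)) ≠ 0 :=
        ne_of_gt (Real.sqrt_pos.mpr (hlam_pos j))
      simp only [Matrix.smul_apply, Matrix.vecMulVec_apply, Pi.smul_apply, smul_eq_mul]
      field_simp
    rw [Finset.sum_congr rfl (fun j _ => hterm j)]
    -- Σ_{j : Fin J.card} vecMulVec (X ᵥ V (idx j)) (V (idx j)) = Σ_{i ∈ J} ... = Σ_univ = X
    have h1 : ∑ j, Matrix.vecMulVec (X *ᵥ V (idx j)) (V (idx j))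
        = ∑ i ∈ J, Matrix.vecMulVec (X *ᵥ V i) (V i) := by
      rw [← Finset.sum_coe_sort J (fun i => Matrix.vecMulVec (X *ᵥ V i) (V i))]
      exact Equiv.sum_comp e.toEquiv (fun x => Matrix.vecMulVec (X *ᵥ V (x:Fin n)) (V (x:Fin n)))
    rw [h1]
    conv_lhs => rw [hdecomp]
    symm
    apply Finset.sum_subset (Finset.subset_univ J)
    intro i _ hiJ
    have h0 : lam i = 0 := by
      by_contra h
      exact hiJ (by rw [hJ, Finset.mem_filter]; exact ⟨Finset.mem_univ i, h⟩)
    rw [hzero i h0]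
    ext p q
    simp [Matrix.vecMulVec_apply]


lemma cross_dot_zero {n r s : ℕ} {X R : Matrix (Fin n) (Fin n) ℝ}
    (h : Xᵀ * R = 0)
    {τ : Fin r → ℝ} {ρ : Fin s → ℝ} {a : Fin r → (Fin n → ℝ)} {c : Fin s → (Fin n → ℝ)}
    {b : Fin r → (Fin n → ℝ)} {d : Fin s → (Fin n → ℝ)}
    (hτ : ∀ j, 0 < τ j) (hρ : ∀ j, 0 < ρ j)
    (hXb : ∀ j, X *ᵥ b j = τ j • a j) (hRd : ∀ j, R *ᵥ d j = ρ j • c j) :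
    ∀ i j, a i ⬝ᵥ c j = 0 := by
  intro i j
  have key : (τ i * ρ j) * (a i ⬝ᵥ c j) = 0 := by
    have : (X *ᵥ b i) ⬝ᵥ (R *ᵥ d j) = 0 := by
      rw [dot_mulVec_mulVec', h]
      simp
    rw [hXb, hRd, smul_dotProduct, dotProduct_smul, smul_eq_mul,
      smul_eq_mul] at this
    rw [mul_assoc, this]
  have hne : τ i * ρ j ≠ 0 := ne_of_gt (mul_pos (hτ i) (hρ j))
  exact (mul_eq_zero.mp key).resolve_left hne

lemma extend_orthonormal {n m : ℕ} (hmn : m ≤ n) (A : Fin m → (Fin n → ℝ))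
    (hA : ∀ i j, A i ⬝ᵥ A j = if i = j then 1 else 0) :
    ∃ u : Fin n → (Fin n → ℝ),
      (∀ i j, u i ⬝ᵥ u j = if i = j then 1 else 0) ∧
      (∀ j : Fin m, u (Fin.castLE hmn j) = A j) := by
  classical
  set w : Fin n → EuclideanSpace ℝ (Fin n) := fun k =>
    if h : (k : ℕ) < m then (WithLp.equiv 2 (Fin n → ℝ)).symm (A ⟨k, h⟩) else 0 with hw
  set S : Set (Fin n) := {k | (k : ℕ) < m} with hS
  have hwS : ∀ (k : Fin n) (h : (k:ℕ) < m), WithLp.equiv 2 (Fin n → ℝ) (w k) = A ⟨k, h⟩ := by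
    intro k h
    simp only [hw, dif_pos h]
    exact Equiv.apply_symm_apply _ _
  have hON : Orthonormal ℝ (S.restrict w) := by
    rw [orthonormal_iff_ite]
    intro i j
    rw [EuclideanSpace.inner_eq_star_dotProduct]
    have hi := hwS i.1 i.2
    have hj := hwS j.1 j.2
    simp only [Set.restrict_apply, star_trivial, hi, hj]
    show (w j.1).ofLp ⬝ᵥ (w i.1).ofLp = _
    rw [dotProduct_comm, show (w i.1).ofLp = _ from hi, show (w j.1).ofLp = _ from hj]
    rw [hA]
    by_cases h : i = j
    · rw [if_pos (by rw [h]), if_pos h]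
    · rw [if_neg, if_neg h]
      intro hcontra
      apply h
      apply Subtype.ext
      apply Fin.ext
      simpa [Fin.ext_iff] using hcontra
  obtain ⟨Bas, hBas⟩ := hON.exists_orthonormalBasis_extension_of_card_eq (by simp)
  refine ⟨fun k => WithLp.equiv 2 (Fin n → ℝ) (Bas k), ?_, ?_⟩
  · intro i j
    have := orthonormal_iff_ite.mp Bas.orthonormal i j
    rw [EuclideanSpace.inner_eq_star_dotProduct] at this
    simpa [dotProduct_comm] using this
  · intro j
    have hmem : (Fin.castLE hmn j) ∈ S := by
      rw [hS]; simpa using j.isLt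
    show WithLp.equiv 2 (Fin n → ℝ) (Bas (Fin.castLE hmn j)) = A j
    rw [hBas _ hmem]
    simp only [hw, dif_pos (show ((Fin.castLE hmn j : Fin n) : ℕ) < m from j.isLt)]
    rw [Equiv.apply_symm_apply]
    exact congrArg A (Fin.ext rfl)

lemma combine {n : ℕ} (X R : Matrix (Fin n) (Fin n) ℝ) (K : ℕ) (hK : X.rank ≤ K)
    (h1 : Xᵀ * R = 0) (h2 : R * Xᵀ = 0) :
    ∃ (u v : Fin n → (Fin n → ℝ)) (σ : Fin n → ℝ) (I : Finset (Fin n)),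
      (∀ i j, u i ⬝ᵥ u j = if i = j then 1 else 0) ∧
      (∀ i j, v i ⬝ᵥ v j = if i = j then 1 else 0) ∧
      (∀ i, 0 ≤ σ i) ∧
      X + R = ∑ k, σ k • Matrix.vecMulVec (u k) (v k) ∧
      I.card ≤ K ∧
      X = ∑ k ∈ I, σ k • Matrix.vecMulVec (u k) (v k) := by
  classical
  obtain ⟨r, τ, a, b, hrrank, hτ, ha, hb, hXb, hXa, hXsum⟩ := svd_core X
  obtain ⟨s, ρ, c, d, hsrank, hρ, hc, hd, hRd, hRc, hRsum⟩ := svd_core R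
  -- cross orthogonality
  have hac : ∀ i j, a i ⬝ᵥ c j = 0 := cross_dot_zero h1 hτ hρ hXb hRd
  have hbd : ∀ i j, b i ⬝ᵥ d j = 0 := by
    have h3 : X * Rᵀ = 0 := by
      have := congrArg Matrix.transpose h2
      simpa [Matrix.transpose_mul] using this
    have h4 : Xᵀᵀ * Rᵀ = 0 := by rwa [Matrix.transpose_transpose]
    exact cross_dot_zero h4 hτ hρ hXa hRc
  -- combined families
  set A : Fin (r + s) → (Fin n → ℝ) := Fin.append a c with hA
  set B : Fin (r + s) → (Fin n → ℝ) := Fin.append b d with hB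
  set sig : Fin (r + s) → ℝ := Fin.append τ ρ with hsig
  have hAo : ∀ i j, A i ⬝ᵥ A j = if i = j then 1 else 0 := by
    intro i j
    refine Fin.addCases (fun i' => ?_) (fun i' => ?_) i <;> clear i
    · refine Fin.addCases (fun j' => ?_) (fun j' => ?_) j <;> clear j
      · rw [hA]
        simp only [Fin.append_left]
        rw [ha]
        congr 1
        simp [Fin.castAdd, eq_iff_true_of_subsingleton, Fin.ext_iff]
      · rw [hA]
        simp only [Fin.append_left, Fin.append_right]
        rw [hac, if_neg]
        intro hcontra
        have := congrArg Fin.val hcontra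
        simp [Fin.castAdd, Fin.natAdd] at this
        omega
    · refine Fin.addCases (fun j' => ?_) (fun j' => ?_) j <;> clear j
      · rw [hA]
        simp only [Fin.append_left, Fin.append_right]
        rw [show c i' ⬝ᵥ a j' = a j' ⬝ᵥ c i' from dotProduct_comm _ _, hac, if_neg]
        intro hcontra
        have := congrArg Fin.val hcontra
        simp [Fin.castAdd, Fin.natAdd] at this
        omega
      · rw [hA]
        simp only [Fin.append_right]
        rw [hc]
        congr 1
        simp [Fin.natAdd, Fin.ext_iff]
  have hBo : ∀ i j, B i ⬝ᵥ B j = if i = j then 1 else 0 := by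
    intro i j
    refine Fin.addCases (fun i' => ?_) (fun i' => ?_) i <;> clear i
    · refine Fin.addCases (fun j' => ?_) (fun j' => ?_) j <;> clear j
      · rw [hB]
        simp only [Fin.append_left]
        rw [hb]
        congr 1
        simp [Fin.ext_iff]
      · rw [hB]
        simp only [Fin.append_left, Fin.append_right]
        rw [hbd, if_neg]
        intro hcontra
        have := congrArg Fin.val hcontra
        simp [Fin.castAdd, Fin.natAdd] at this
        omega
    · refine Fin.addCases (fun j' => ?_) (fun j' => ?_) j <;> clear j
      · rw [hB]
        simp only [Fin.append_left, Fin.append_right]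
        rw [show d i' ⬝ᵥ b j' = b j' ⬝ᵥ d i' from dotProduct_comm _ _, hbd, if_neg]
        intro hcontra
        have := congrArg Fin.val hcontra
        simp [Fin.castAdd, Fin.natAdd] at this
        omega
      · rw [hB]
        simp only [Fin.append_right]
        rw [hd]
        congr 1
        simp [Fin.ext_iff]
  -- r + s ≤ n
  have hrs : r + s ≤ n := by
    have := card_le_rank (1 : Matrix (Fin n) (Fin n) ℝ) A
      (fun j => ⟨A j, Matrix.one_mulVec _⟩) hAo
    rwa [Matrix.rank_one, Fintype.card_fin] at this
  obtain ⟨u, hu, huA⟩ := extend_orthonormal hrs A hAo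
  obtain ⟨v, hv, hvB⟩ := extend_orthonormal hrs B hBo
  set σ : Fin n → ℝ := fun k => if h : (k : ℕ) < r + s then sig ⟨k, h⟩ else 0 with hσ
  set emb1 : Fin r → Fin n := fun j => Fin.castLE hrs (Fin.castAdd s j) with hemb1
  set emb2 : Fin s → Fin n := fun j => Fin.castLE hrs (Fin.natAdd r j) with hemb2
  have hemb1_inj : Function.Injective emb1 := by
    intro i j h
    have := congrArg Fin.val h
    simpa [hemb1, Fin.ext_iff] using this
  have hemb2_inj : Function.Injective emb2 := by
    intro i j h
    have := congrArg Fin.val h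
    simp only [hemb2, Fin.ext_iff] at this ⊢
    simpa [Fin.coe_castLE, Fin.coe_natAdd] using this
  set I : Finset (Fin n) := Finset.image emb1 Finset.univ with hI
  set I2 : Finset (Fin n) := Finset.image emb2 Finset.univ with hI2
  -- term values on I
  have hterm1 : ∀ j : Fin r, σ (emb1 j) • Matrix.vecMulVec (u (emb1 j)) (v (emb1 j))
      = τ j • Matrix.vecMulVec (a j) (b j) := by
    intro j
    have hlt : ((Fin.castAdd s j : Fin (r+s)) : ℕ) < r + s := (Fin.castAdd s j).isLt
    have h1' : σ (emb1 j) = τ j := by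
      rw [hσ]
      simp only [hemb1, Fin.coe_castLE, dif_pos hlt]
      have : (⟨((Fin.castAdd s j : Fin (r+s)) : ℕ), hlt⟩ : Fin (r+s)) = Fin.castAdd s j :=
        Fin.ext rfl
      rw [this, hsig, Fin.append_left]
    have h2' : u (emb1 j) = a j := by
      rw [hemb1, huA, hA, Fin.append_left]
    have h3' : v (emb1 j) = b j := by
      rw [hemb1, hvB, hB, Fin.append_left]
    rw [h1', h2', h3']
  have hterm2 : ∀ j : Fin s, σ (emb2 j) • Matrix.vecMulVec (u (emb2 j)) (v (emb2 j))
      = ρ j • Matrix.vecMulVec (c j) (d j) := by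
    intro j
    have hlt : ((Fin.natAdd r j : Fin (r+s)) : ℕ) < r + s := (Fin.natAdd r j).isLt
    have h1' : σ (emb2 j) = ρ j := by
      rw [hσ]
      simp only [hemb2, Fin.coe_castLE, dif_pos hlt]
      have : (⟨((Fin.natAdd r j : Fin (r+s)) : ℕ), hlt⟩ : Fin (r+s)) = Fin.natAdd r j :=
        Fin.ext rfl
      rw [this, hsig, Fin.append_right]
    have h2' : u (emb2 j) = c j := by
      rw [hemb2, huA, hA, Fin.append_right]
    have h3' : v (emb2 j) = d j := by
      rw [hemb2, hvB, hB, Fin.append_right]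
    rw [h1', h2', h3']
  have hIsum : ∑ k ∈ I, σ k • Matrix.vecMulVec (u k) (v k) = X := by
    rw [hI, Finset.sum_image (fun i _ j _ h => hemb1_inj h)]
    rw [Finset.sum_congr rfl (fun j _ => hterm1 j)]
    exact hXsum.symm
  have hI2sum : ∑ k ∈ I2, σ k • Matrix.vecMulVec (u k) (v k) = R := by
    rw [hI2, Finset.sum_image (fun i _ j _ h => hemb2_inj h)]
    rw [Finset.sum_congr rfl (fun j _ => hterm2 j)]
    exact hRsum.symm
  refine ⟨u, v, σ, I, hu, hv, ?_, ?_, ?_, hIsum.symm⟩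
  · intro k
    by_cases h : (k:ℕ) < r + s
    · simp only [hσ, dif_pos h]
      refine Fin.addCases (motive := fun t => 0 ≤ sig t) (fun i' => ?_) (fun i' => ?_)
        (⟨(k:ℕ), h⟩ : Fin (r+s))
      · show (0:ℝ) ≤ sig (Fin.castAdd s i')
        rw [hsig, Fin.append_left]; exact (hτ i').le
      · show (0:ℝ) ≤ sig (Fin.natAdd r i')
        rw [hsig, Fin.append_right]; exact (hρ i').le
    · simp only [hσ, dif_neg h]
      exact le_refl 0
  · -- total sum
    have hdisj : Disjoint I I2 := by
      rw [Finset.disjoint_left]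
      intro k hk1 hk2
      rw [hI, Finset.mem_image] at hk1
      rw [hI2, Finset.mem_image] at hk2
      obtain ⟨j1, _, hj1⟩ := hk1
      obtain ⟨j2, _, hj2⟩ := hk2
      rw [← hj2] at hj1
      have := congrArg Fin.val hj1
      simp [hemb1, hemb2] at this
      omega
    have hsub : I ∪ I2 ⊆ Finset.univ := Finset.subset_univ _
    have hzero : ∀ k ∈ Finset.univ, k ∉ I ∪ I2 →
        σ k • Matrix.vecMulVec (u k) (v k) = 0 := by
      intro k _ hk
      have hge : ¬ ((k:ℕ) < r + s) := by
        intro hlt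
        apply hk
        rw [Finset.mem_union]
        by_cases h : (k:ℕ) < r
        · left
          rw [hI, Finset.mem_image]
          exact ⟨⟨(k:ℕ), h⟩, Finset.mem_univ _, by apply Fin.ext; simp [hemb1]⟩
        · right
          rw [hI2, Finset.mem_image]
          refine ⟨⟨(k:ℕ) - r, by omega⟩, Finset.mem_univ _, ?_⟩
          apply Fin.ext
          simp [hemb2]
          omega
      simp only [hσ, dif_neg hge, zero_smul]
    rw [← Finset.sum_subset hsub hzero, Finset.sum_union hdisj, hIsum, hI2sum]
  · -- card
    rw [hI, Finset.card_image_of_injective _ hemb1_inj, Finset.card_univ, Fintype.card_fin]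
    exact le_trans hrrank hK


/-- Converse characterization of fixed points of the rank-`K` ADMM update map:
if `X̃` has rank at most `K` and minimizes `‖Y − (α X̃ + (1−α) D)‖_F` over all
matrices `Y` of rank at most `K`, then there is an SVD `D = U diag(σ) Vᵀ` and a
subset `I` of at most `K` indices such that `X̃ = ∑_{i∈I} σ_i u_i v_iᵀ`. -/
theorem fixed_point_is_subset_of_singular_triples {n : ℕ}
    (D : Matrix (Fin n) (Fin n) ℝ)
    (K : ℕ) (hK1 : 1 ≤ K) (hKn : K ≤ n)
    (α : ℝ) (hα : α ∈ Set.Ico (0 : ℝ) 1)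
    (Xtilde : Matrix (Fin n) (Fin n) ℝ)
    (hrank : Xtilde.rank ≤ K)
    (hfix : ∀ Y : Matrix (Fin n) (Fin n) ℝ, Y.rank ≤ K →
      frob (Xtilde - (α • Xtilde + (1 - α) • D)) ≤
        frob (Y - (α • Xtilde + (1 - α) • D))) :
    ∃ (U V : Matrix (Fin n) (Fin n) ℝ) (σ : Fin n → ℝ) (I : Finset (Fin n)),
      Uᵀ * U = 1 ∧ Vᵀ * V = 1 ∧
      Antitone σ ∧ (∀ i, 0 ≤ σ i) ∧
      D = U * Matrix.diagonal σ * Vᵀ ∧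
      I.card ≤ K ∧
      Xtilde = ∑ i ∈ I,
        σ i • Matrix.vecMulVec (fun r => U r i) (fun c => V c i) := by
  classical
  obtain ⟨h1, h2⟩ := first_order D K α hα Xtilde hrank hfix
  obtain ⟨u, v, σ0, I0, hu, hv, hσ0, hDsum0, hIcard, hXI⟩ :=
    combine Xtilde (D - Xtilde) K hrank h1 h2
  have hDsum : D = ∑ k, σ0 k • Matrix.vecMulVec (u k) (v k) := by
    rw [← hDsum0]
    abel
  set π := Tuple.sort (fun k => -σ0 k) with hπ
  set σ : Fin n → ℝ := fun k => σ0 (π k) with hσ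
  set U : Matrix (Fin n) (Fin n) ℝ := Matrix.of (fun p k => u (π k) p) with hU
  set V : Matrix (Fin n) (Fin n) ℝ := Matrix.of (fun p k => v (π k) p) with hV
  set I : Finset (Fin n) := I0.image π.symm with hI
  have hcolU : ∀ i, (fun p => U p i) = u (π i) := fun i => rfl
  have hcolV : ∀ i, (fun p => V p i) = v (π i) := fun i => rfl
  refine ⟨U, V, σ, I, ?_, ?_, ?_, ?_, ?_, ?_, ?_⟩
  · ext i j
    show (∑ p, U p i * U p j) = (1 : Matrix (Fin n) (Fin n) ℝ) i j
    have := hu (π i) (π j)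
    rw [dotProduct] at this
    rw [show (∑ p, U p i * U p j) = ∑ p, u (π i) p * u (π j) p from rfl, this,
      Matrix.one_apply]
    congr 1
    simp [Equiv.apply_eq_iff_eq]
  · ext i j
    show (∑ p, V p i * V p j) = (1 : Matrix (Fin n) (Fin n) ℝ) i j
    have := hv (π i) (π j)
    rw [dotProduct] at this
    rw [show (∑ p, V p i * V p j) = ∑ p, v (π i) p * v (π j) p from rfl, this,
      Matrix.one_apply]
    congr 1
    simp [Equiv.apply_eq_iff_eq]
  · intro i j hij
    have := Tuple.monotone_sort (fun k => -σ0 k) hij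
    simp only [Function.comp_apply] at this
    show σ0 (π j) ≤ σ0 (π i)
    linarith
  · intro i
    exact hσ0 (π i)
  · ext p q
    have hD2 : D = ∑ k, σ0 (π k) • Matrix.vecMulVec (u (π k)) (v (π k)) := by
      rw [hDsum, ← Equiv.sum_comp π (fun k => σ0 k • Matrix.vecMulVec (u k) (v k))]
    rw [hD2]
    simp only [Matrix.sum_apply, Matrix.smul_apply, Matrix.vecMulVec_apply,
      Matrix.mul_apply, Matrix.transpose_apply, Matrix.diagonal, Matrix.of_apply]
    have hinner : ∀ x, (∑ x1, U p x1 * if x1 = x then σ x1 else 0) = U p x * σ x := by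
      intro x
      simp [mul_ite, Finset.sum_ite_eq']
    calc ∑ x, σ0 (π x) • (u (π x) p * v (π x) q)
        = ∑ x, (U p x * σ x) * V q x := by
          refine Finset.sum_congr rfl fun x _ => ?_
          show σ0 (π x) • (u (π x) p * v (π x) q) = (u (π x) p * σ0 (π x)) * v (π x) q
          rw [smul_eq_mul]
          ring
      _ = ∑ x, (∑ x1, U p x1 * if x1 = x then σ x1 else 0) * V q x := by
          refine Finset.sum_congr rfl fun x _ => ?_
          rw [hinner x]
  · rw [hI]
    calc (I0.image π.symm).card = I0.card := Finset.card_image_of_injective _ π.symm.injective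
      _ ≤ K := hIcard
  · rw [hI, Finset.sum_image (fun i _ j _ h => π.symm.injective h)]
    rw [hXI]
    refine Finset.sum_congr rfl fun m hm => ?_
    have h1' : σ (π.symm m) = σ0 m := by
      show σ0 (π (π.symm m)) = σ0 m
      rw [Equiv.apply_symm_apply]
    have h2' : (fun p => U p (π.symm m)) = u m := by
      rw [hcolU, Equiv.apply_symm_apply]
    have h3' : (fun p => V p (π.symm m)) = v m := by
      rw [hcolV, Equiv.apply_symm_apply]
    rw [h1', h2', h3']
end
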